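/- (Split–Split, right) For every type X, every step function f : S X and rationals a, b, c strictly between 0 and 1, if a + b − a·b = c then splitR (splitR f a) b ≍ splitR f c, where ≍ is the lifted equality relation on S X. -/

import Mathlib

set_option linter.unusedVariables false

/-- Rationals strictly between 0 and 1. -/
abbrev OO : Type := {q : ℚ // 0 < q ∧ q < 1}

/-- Rational step functions on the unit interval with values in `X`. -/
inductive S (X : Type) : Type
  | const : X → S X
  | glue : OO → S X → S X → S X

namespace S

def divO (a o : OO) (h : a.1 < o.1) : OO :=
  ⟨a.1 / o.1, div_pos a.2.1 o.2.1, (div_lt_one o.2.1).2 h⟩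

def subO (a o : OO) (h : o.1 < a.1) : OO :=
  ⟨(a.1 - o.1) / (1 - o.1),
    div_pos (by linarith) (by linarith [o.2.2]),
    (div_lt_one (by linarith [o.2.2])).2 (by linarith [a.2.2])⟩

/-- Left split: the part of the step function on `[0,a]`, rescaled to `[0,1]`. -/
def splitL {X : Type} : S X → OO → S X
  | const x, _ => const x
  | glue o f g, a =>
      if h : a.1 < o.1 then splitL f (divO a o h)
      else if h' : o.1 < a.1 then glue (divO o a h') f (splitL g (subO a o h'))
      else f

/-- Right split: the part of the step function on `[a,1]`, rescaled to `[0,1]`. -/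
def splitR {X : Type} : S X → OO → S X
  | const x, _ => const x
  | glue o f g, a =>
      if h : a.1 < o.1 then glue (subO o a h) (splitR f (divO a o h)) g
      else if h' : o.1 < a.1 then splitR g (subO a o h')
      else g

/-- The catamorphism (fold) for step functions. -/
def fold {X Y : Type} (φ : X → Y) (ψ : OO → Y → Y → Y) : S X → Y
  | const x => φ x
  | glue o f g => ψ o (fold φ ψ f) (fold φ ψ g)

/-- `map` for step functions. -/
def mapS {X Y : Type} (f : X → Y) : S X → S Y
  | const x => const (f x)
  | glue o l r => glue o (mapS f l) (mapS f r)

/-- The applicative `ap` (pointwise application) for step functions. -/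
def ap {X Y : Type} : S (X → Y) → S X → S Y
  | const f, x => mapS f x
  | glue o fl fr, x => glue o (ap fl (splitL x o)) (ap fr (splitR x o))

/-- Binary map. -/
def map2 {X Y Z : Type} (f : X → Y → Z) (a : S X) (b : S Y) : S Z :=
  ap (mapS f a) b

/-- `fold⋆`: a step function of propositions holds everywhere. -/
def foldStar : S Prop → Prop := fold id (fun _ p q => p ∧ q)

/-- Lifting of a relation to step functions: it holds pointwise everywhere. -/
def liftRel {X Y : Type} (R : X → Y → Prop) (f : S X) (g : S Y) : Prop :=
  foldStar (map2 R f g)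

/-- The equivalence `≍` on step functions: the lifting of equality. -/
def equivS {X : Type} (f g : S X) : Prop := liftRel Eq f g

def foldSup : S ℚ → ℚ := fold id (fun _ x y => max x y)

def foldAffine : S ℚ → ℚ := fold id (fun o x y => o.1 * x + (1 - o.1) * y)

def normInf (f : S ℚ) : ℚ := foldSup (mapS (fun q => |q|) f)

def normOne (f : S ℚ) : ℚ := foldAffine (mapS (fun q => |q|) f)

def dInf (f g : S ℚ) : ℚ := normInf (map2 (· - ·) f g)

def dOne (f g : S ℚ) : ℚ := normOne (map2 (· - ·) f g)

end S

open S

theorem equivS_refl {X : Type} (f : S X) : equivS f f := by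
  induction f with
  | const x => exact rfl
  | glue o l r ihl ihr =>
    show foldStar (map2 Eq (glue o l r) (glue o l r))
    simp only [map2, mapS, ap, splitL, splitR, dif_neg (lt_irrefl o.1)]
    exact ⟨ihl, ihr⟩

theorem splitR_splitR_eq {X : Type} (f : S X) : ∀ (a b c : OO),
    a.1 + b.1 - a.1 * b.1 = c.1 →
    splitR (splitR f a) b = splitR f c := by
  induction f with
  | const x => intro a b c h; rfl
  | glue o l r ihl ihr =>
    rintro ⟨a, ha0, ha1⟩ ⟨b, hb0, hb1⟩ ⟨c, hc0, hc1⟩ h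
    obtain ⟨o, ho0, ho1⟩ := o
    simp only at h
    subst h
    have h1a : (0:ℚ) < 1 - a := by linarith
    have h1o : (0:ℚ) < 1 - o := by linarith
    have h1b : (0:ℚ) < 1 - b := by linarith
    rcases lt_trichotomy a o with hao | hao | hao
    · simp only [splitR, dif_pos hao]
      have hoa : (0:ℚ) < o - a := by linarith
      split_ifs with h1 h2 h3 h4 h5 h6 h7 h8
      · -- b < o', c < o : main glue case
        have h1' : b < (o - a) / (1 - a) := h1
        rw [lt_div_iff₀ h1a] at h1'
        congr 1
        · apply Subtype.ext
          show ((o - a) / (1 - a) - b) / (1 - b)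
              = (o - (a + b - a * b)) / (1 - (a + b - a * b))
          have e : (1:ℚ) - (a + b - a * b) = (1 - a) * (1 - b) := by ring
          rw [e]
          field_simp
          ring
        · apply ihl
          show a / o + b / ((o - a) / (1 - a)) - (a / o) * (b / ((o - a) / (1 - a)))
              = (a + b - a * b) / o
          field_simp
          ring
      · exfalso
        have h1' : b < (o - a) / (1 - a) := h1
        rw [lt_div_iff₀ h1a] at h1'
        have h3' : o < a + b - a * b := h3
        nlinarith
      · exfalso
        have h1' : b < (o - a) / (1 - a) := h1
        rw [lt_div_iff₀ h1a] at h1'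
        have h2' : ¬ (a + b - a * b < o) := h2
        exact h2' (by nlinarith)
      · exfalso
        have h4' : (o - a) / (1 - a) < b := h4
        rw [div_lt_iff₀ h1a] at h4'
        have h5' : a + b - a * b < o := h5
        nlinarith
      · -- o' < b, o < c : main right case
        apply congrArg
        apply Subtype.ext
        show (b - (o - a) / (1 - a)) / (1 - (o - a) / (1 - a))
            = ((a + b - a * b) - o) / (1 - o)
        have e : (1:ℚ) - (o - a) / (1 - a) = (1 - o) / (1 - a) := by
          field_simp
          ring
        rw [e]
        field_simp
        ring
      · exfalso
        have h4' : (o - a) / (1 - a) < b := h4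
        rw [div_lt_iff₀ h1a] at h4'
        have h6' : ¬ (o < a + b - a * b) := h6
        exact h6' (by nlinarith)
      · exfalso
        have h1' : ¬ b < (o - a) / (1 - a) := h1
        rw [lt_div_iff₀ h1a] at h1'
        have h7' : a + b - a * b < o := h7
        exact h1' (by nlinarith)
      · exfalso
        have h4' : ¬ (o - a) / (1 - a) < b := h4
        rw [div_lt_iff₀ h1a] at h4'
        have h8' : o < a + b - a * b := h8
        exact h4' (by nlinarith)
      · rfl
    · -- a = o
      subst hao
      have e : splitR (glue ⟨a, ho0, ho1⟩ l r) ⟨a, ha0, ha1⟩ = r := by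
        simp only [splitR]
        split_ifs with h1
        · exact absurd (show a < a from h1) (lt_irrefl a)
        · rfl
      rw [e]
      simp only [splitR]
      split_ifs with h1 h2
      · exfalso
        have h1' : a + b - a * b < a := h1
        nlinarith
      · apply congrArg
        apply Subtype.ext
        show b = ((a + b - a * b) - a) / (1 - a)
        rw [eq_div_iff (ne_of_gt h1a)]
        ring
      · exfalso
        have h2' : ¬ a < a + b - a * b := h2
        exact h2' (by nlinarith)
    · -- o < a
      simp only [splitR, dif_neg (not_lt.2 hao.le), dif_pos hao]
      split_ifs with h1 h2
      · exfalso
        have h1' : a + b - a * b < o := h1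
        nlinarith
      · apply ihr
        show (a - o) / (1 - o) + b - ((a - o) / (1 - o)) * b
            = ((a + b - a * b) - o) / (1 - o)
        field_simp
        ring
      · exfalso
        have h2' : ¬ o < a + b - a * b := h2
        exact h2' (by nlinarith)

/-- Split–Split, right: if `a + b − a·b = c` then `splitR (splitR f a) b ≍ splitR f c`. -/
theorem splitR_splitR_equiv {X : Type} (f : S X) (a b c : OO)
    (h : a.1 + b.1 - a.1 * b.1 = c.1) :
    equivS (splitR (splitR f a) b) (splitR f c) := by
  rw [splitR_splitR_eq f a b c h]
  exact equivS_refl _
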